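/- Dual sets are exposed faces: (1) for every nonempty X ⊆ S₁, the set X° = {Ω ∈ S₁° | Tr(Ωρ) = 0 for all ρ ∈ X} is a face of S₁° (IsExtreme ℝ S₁° X°), and there exists ρ₀ ∈ convexHull ℝ X such that X° = {Ω ∈ S₁° | Tr(Ωρ₀) = 0}; (2) dually, for every nonempty Y ⊆ S₁°, the set Y° = {ρ ∈ S₁ | Tr(Ωρ) = 0 for all Ω ∈ Y} is a face of S₁ (IsExtreme ℝ S₁ Y°), and there exists Ω₀ ∈ convexHull ℝ Y such that Y° = {ρ ∈ S₁ | Tr(Ω₀ρ) = 0}. -/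

import Mathlib

open Matrix
open scoped ComplexOrder

noncomputable section

namespace EW

/-- Complex square matrices indexed by `Fin Na × Fin Nb`. -/
abbrev Mat (Na Nb : ℕ) := Matrix (Fin Na × Fin Nb) (Fin Na × Fin Nb) ℂ

/-- Kronecker product of vectors: `(φ⊗χ)_(i,j) = φ_i · χ_j`. -/
def kron {Na Nb : ℕ} (φ : Fin Na → ℂ) (χ : Fin Nb → ℂ) : Fin Na × Fin Nb → ℂ :=
  fun p => φ p.1 * χ p.2

/-- Sesquilinear pairing `xᴴ A y`. -/
def pair {n : Type*} [Fintype n] (A : Matrix n n ℂ) (x y : n → ℂ) : ℂ :=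
  star x ⬝ᵥ A.mulVec y

/-- The biquadratic form `f_A(φ,χ) = (φ⊗χ)ᴴ A (φ⊗χ)`. -/
def biquad {Na Nb : ℕ} (A : Mat Na Nb) (φ : Fin Na → ℂ) (χ : Fin Nb → ℂ) : ℂ :=
  pair A (kron φ χ) (kron φ χ)

/-- An entanglement witness: a Hermitian matrix whose biquadratic form is nonnegative. -/
def IsWitness {Na Nb : ℕ} (A : Mat Na Nb) : Prop :=
  A.IsHermitian ∧ ∀ φ χ, 0 ≤ biquad A φ χ

/-- `S₁°`, the set of trace-one entanglement witnesses. -/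
def witnessSet (Na Nb : ℕ) : Set (Mat Na Nb) :=
  { Ω | IsWitness Ω ∧ Ω.trace = 1 }

/-- A zero of a witness: a pair of nonzero vectors where the biquadratic form vanishes. -/
def IsZeroOf {Na Nb : ℕ} (Ω : Mat Na Nb) (φ₀ : Fin Na → ℂ) (χ₀ : Fin Nb → ℂ) : Prop :=
  φ₀ ≠ 0 ∧ χ₀ ≠ 0 ∧ biquad Ω φ₀ χ₀ = 0

/-- The Hessian form
`H_A(φ₀,χ₀;ξ,ζ) = Re[(ξ⊗χ₀)ᴴA(ξ⊗χ₀) + (φ₀⊗ζ)ᴴA(φ₀⊗ζ) + 2(φ₀⊗ζ)ᴴA(ξ⊗χ₀) + 2(φ₀⊗χ₀)ᴴA(ξ⊗ζ)]`. -/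
def hessForm {Na Nb : ℕ} (A : Mat Na Nb) (φ₀ : Fin Na → ℂ) (χ₀ : Fin Nb → ℂ)
    (ξ : Fin Na → ℂ) (ζ : Fin Nb → ℂ) : ℝ :=
  (pair A (kron ξ χ₀) (kron ξ χ₀) + pair A (kron φ₀ ζ) (kron φ₀ ζ)
    + 2 * pair A (kron φ₀ ζ) (kron ξ χ₀) + 2 * pair A (kron φ₀ χ₀) (kron ξ ζ)).re

/-- A Hessian zero of `Ω` at the zero `(φ₀,χ₀)`. -/
def IsHessianZeroAt {Na Nb : ℕ} (Ω : Mat Na Nb) (φ₀ : Fin Na → ℂ) (χ₀ : Fin Nb → ℂ)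
    (ξ : Fin Na → ℂ) (ζ : Fin Nb → ℂ) : Prop :=
  (ξ, ζ) ≠ (0, 0) ∧ star φ₀ ⬝ᵥ ξ = 0 ∧ star χ₀ ⬝ᵥ ζ = 0 ∧ hessForm Ω φ₀ χ₀ ξ ζ = 0

/-- A quadratic witness: a witness all of whose zeros have no Hessian zeros. -/
def IsQuadraticWitness {Na Nb : ℕ} (Ω : Mat Na Nb) : Prop :=
  IsWitness Ω ∧ ∀ φ₀ χ₀, IsZeroOf Ω φ₀ χ₀ → ∀ ξ ζ, ¬ IsHessianZeroAt Ω φ₀ χ₀ ξ ζ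

/-- Partial transpose with respect to the second factor. -/
def ptrans {Na Nb : ℕ} (A : Mat Na Nb) : Mat Na Nb :=
  fun p q => A (p.1, q.2) (q.1, p.2)

/-- Euclidean norm of a complex vector. -/
def enorm {n : Type*} [Fintype n] (x : n → ℂ) : ℝ :=
  Real.sqrt (star x ⬝ᵥ x).re

/-- Frobenius norm of a matrix. -/
def frobNorm {Na Nb : ℕ} (A : Mat Na Nb) : ℝ :=
  Real.sqrt (∑ i, ∑ j, ‖A i j‖ ^ 2)

/-- `S₁`, the set of separable states: the convex hull of normalized pure product states. -/
def sepSet (Na Nb : ℕ) : Set (Mat Na Nb) :=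
  convexHull ℝ { M | ∃ (φ : Fin Na → ℂ) (χ : Fin Nb → ℂ), enorm (kron φ χ) = 1 ∧
    M = Matrix.vecMulVec (kron φ χ) (star (kron φ χ)) }

/-- `Γ` satisfies the constraint system of the witness `Ω`. -/
def SatisfiesConstraints {Na Nb : ℕ} (Ω Γ : Mat Na Nb) : Prop :=
  (∀ φ₀ χ₀, IsZeroOf Ω φ₀ χ₀ →
    (∀ φ, pair Γ (kron φ χ₀) (kron φ₀ χ₀) = 0) ∧
    (∀ χ, pair Γ (kron φ₀ χ) (kron φ₀ χ₀) = 0)) ∧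
  (∀ φ₀ χ₀, IsZeroOf Ω φ₀ χ₀ → ∀ ξ ζ, IsHessianZeroAt Ω φ₀ χ₀ ξ ζ →
    ∀ ξ' ζ', star φ₀ ⬝ᵥ ξ' = 0 → star χ₀ ⬝ᵥ ζ' = 0 →
      hessForm Γ φ₀ χ₀ (ξ + ξ') (ζ + ζ') =
        hessForm Γ φ₀ χ₀ ξ ζ + hessForm Γ φ₀ χ₀ ξ' ζ') ∧
  (∀ φ₀ χ₀, IsZeroOf Ω φ₀ χ₀ → ∀ ξ ζ, IsHessianZeroAt Ω φ₀ χ₀ ξ ζ →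
    (pair Γ (kron φ₀ ζ) (kron ξ ζ) + pair Γ (kron ξ χ₀) (kron ξ ζ)).re = 0)

end EW

open EW

section Aux

open Matrix EW
open scoped ComplexOrder

lemma EW.trace_mul_pure {Na Nb : ℕ} (Ω : Mat Na Nb) (v : Fin Na × Fin Nb → ℂ) :
    (Ω * Matrix.vecMulVec v (star v)).trace = pair Ω v v := by
  simp only [Matrix.trace, Matrix.diag_apply, Matrix.mul_apply, Matrix.vecMulVec_apply,
    pair, dotProduct, Matrix.mulVec, Pi.star_apply, Finset.mul_sum]
  exact Finset.sum_congr rfl fun p _ => Finset.sum_congr rfl fun q _ => by ring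

lemma EW.trace_nonneg {Na Nb : ℕ} {Ω ρ : Mat Na Nb} (hΩ : Ω ∈ witnessSet Na Nb)
    (hρ : ρ ∈ sepSet Na Nb) : 0 ≤ (Ω * ρ).trace := by
  have hconv : Convex ℝ {ρ : Mat Na Nb | 0 ≤ (Ω * ρ).trace} := by
    intro x hx y hy a b ha hb hab
    simp only [Set.mem_setOf_eq] at hx hy ⊢
    rw [Matrix.mul_add, Matrix.mul_smul, Matrix.mul_smul, Matrix.trace_add,
      Matrix.trace_smul, Matrix.trace_smul]
    have h1 : (0:ℂ) ≤ a • (Ω * x).trace := by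
      rw [Complex.real_smul]; exact mul_nonneg (Complex.zero_le_real.2 ha) hx
    have h2 : (0:ℂ) ≤ b • (Ω * y).trace := by
      rw [Complex.real_smul]; exact mul_nonneg (Complex.zero_le_real.2 hb) hy
    exact add_nonneg h1 h2
  refine convexHull_min ?_ hconv hρ
  rintro M ⟨φ, χ, -, rfl⟩
  simp only [Set.mem_setOf_eq]
  rw [EW.trace_mul_pure]
  exact hΩ.1.2 φ χ

/-- The trace pairing as an `ℝ`-bilinear map. -/
def EW.traceB (Na Nb : ℕ) : Mat Na Nb →ₗ[ℝ] Mat Na Nb →ₗ[ℝ] ℂ :=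
  LinearMap.mk₂ ℝ (fun A B => (A * B).trace)
    (fun A A' B => by rw [Matrix.add_mul, Matrix.trace_add])
    (fun c A B => by rw [Matrix.smul_mul, Matrix.trace_smul])
    (fun A B B' => by rw [Matrix.mul_add, Matrix.trace_add])
    (fun c A B => by rw [Matrix.mul_smul, Matrix.trace_smul])

lemma EW.dual_face {E : Type*} [AddCommGroup E] [Module ℝ E] [FiniteDimensional ℝ E]
    (f : E →ₗ[ℝ] E →ₗ[ℝ] ℂ) (A B : Set E)
    (hpos : ∀ a ∈ A, ∀ b ∈ B, 0 ≤ f a b)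
    (X : Set E) (hXne : X.Nonempty) (hXB : X ⊆ B) :
    IsExtreme ℝ A {a ∈ A | ∀ x ∈ X, f a x = 0} ∧
      ∃ x₀ ∈ convexHull ℝ X, {a ∈ A | ∀ x ∈ X, f a x = 0} = {a ∈ A | f a x₀ = 0} := by
  constructor
  · constructor
    · exact fun a ha => ha.1
    · rintro x₁ hx₁ x₂ hx₂ a ⟨haA, haz⟩ hseg
      obtain ⟨s, t, hs, ht, hst, rfl⟩ := hseg
      have key : ∀ x ∈ X, f x₁ x = 0 ∧ f x₂ x = 0 := by
        intro x hx
        have h1 : 0 ≤ f x₁ x := hpos x₁ hx₁ x (hXB hx)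
        have h2 : 0 ≤ f x₂ x := hpos x₂ hx₂ x (hXB hx)
        have heq : (s:ℂ) * f x₁ x + (t:ℂ) * f x₂ x = 0 := by
          have h := haz x hx
          rwa [map_add, _root_.map_smul, _root_.map_smul, LinearMap.add_apply, LinearMap.smul_apply,
            LinearMap.smul_apply, Complex.real_smul, Complex.real_smul] at h
        have h1' : 0 ≤ (s:ℂ) * f x₁ x := mul_nonneg (Complex.zero_le_real.2 hs.le) h1
        have h2' : 0 ≤ (t:ℂ) * f x₂ x := mul_nonneg (Complex.zero_le_real.2 ht.le) h2
        obtain ⟨e1, e2⟩ := (add_eq_zero_iff_of_nonneg h1' h2').1 heq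
        exact ⟨(mul_eq_zero.1 e1).resolve_left (Complex.ofReal_ne_zero.2 hs.ne'),
          (mul_eq_zero.1 e2).resolve_left (Complex.ofReal_ne_zero.2 ht.ne')⟩
      exact ⟨hx₁, fun x hx => (key x hx).1⟩
  · obtain ⟨b, hbX, hspan, hli⟩ := exists_linearIndependent ℝ X
    obtain ⟨xs, hxs⟩ := hXne
    have hTfin : (insert xs b).Finite := Set.Finite.insert xs hli.setFinite
    set T : Finset E := hTfin.toFinset with hT
    have hTX : ∀ y ∈ T, y ∈ X := by
      intro y hy
      rw [hT, Set.Finite.mem_toFinset] at hy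
      rcases hy with rfl | h
      · exact hxs
      · exact hbX h
    have hxsT : xs ∈ T := by rw [hT, Set.Finite.mem_toFinset]; exact Set.mem_insert _ _
    have hcardpos : 0 < T.card := Finset.card_pos.2 ⟨xs, hxsT⟩
    have hc : ((T.card : ℝ))⁻¹ ≠ 0 := by positivity
    refine ⟨(T.card : ℝ)⁻¹ • ∑ y ∈ T, y, ?_, ?_⟩
    · have h := T.centerMass_mem_convexHull (w := fun _ => (1:ℝ)) (z := id)
        (fun i _ => zero_le_one) (by simpa using hcardpos) (fun i hi => hTX i hi)
      simpa [Finset.centerMass] using h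
    · ext a
      constructor
      · rintro ⟨haA, haz⟩
        refine ⟨haA, ?_⟩
        rw [_root_.map_smul, map_sum, Finset.sum_eq_zero (fun y hy => haz y (hTX y hy)), smul_zero]
      · rintro ⟨haA, h0⟩
        refine ⟨haA, ?_⟩
        have hsum0 : ∑ y ∈ T, f a y = 0 := by
          rw [_root_.map_smul, map_sum, smul_eq_zero] at h0
          exact h0.resolve_left hc
        have heach : ∀ y ∈ T, f a y = 0 :=
          (Finset.sum_eq_zero_iff_of_nonneg
            (fun y hy => hpos a haA y (hXB (hTX y hy)))).1 hsum0
        intro x hx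
        have hxspan : x ∈ Submodule.span ℝ (insert xs b) := by
          have hxs' : x ∈ Submodule.span ℝ b := hspan ▸ Submodule.subset_span hx
          exact Submodule.span_mono (Set.subset_insert xs b) hxs'
        have hker : Submodule.span ℝ (insert xs b) ≤ LinearMap.ker (f a) := by
          rw [Submodule.span_le]
          intro y hy
          have : y ∈ T := by rw [hT, Set.Finite.mem_toFinset]; exact hy
          exact LinearMap.mem_ker.2 (heach y this)
        exact LinearMap.mem_ker.1 (hker hxspan)

end Aux

theorem dual_sets_are_exposed_faces (Na Nb : ℕ) :
    (∀ X : Set (Mat Na Nb), X.Nonempty → X ⊆ sepSet Na Nb →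
      IsExtreme ℝ (witnessSet Na Nb)
        {Ω ∈ witnessSet Na Nb | ∀ ρ ∈ X, (Ω * ρ).trace = 0} ∧
      ∃ ρ₀ ∈ convexHull ℝ X,
        {Ω ∈ witnessSet Na Nb | ∀ ρ ∈ X, (Ω * ρ).trace = 0} =
        {Ω ∈ witnessSet Na Nb | (Ω * ρ₀).trace = 0}) ∧
    (∀ Y : Set (Mat Na Nb), Y.Nonempty → Y ⊆ witnessSet Na Nb →
      IsExtreme ℝ (sepSet Na Nb)
        {ρ ∈ sepSet Na Nb | ∀ Ω ∈ Y, (Ω * ρ).trace = 0} ∧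
      ∃ Ω₀ ∈ convexHull ℝ Y,
        {ρ ∈ sepSet Na Nb | ∀ Ω ∈ Y, (Ω * ρ).trace = 0} =
        {ρ ∈ sepSet Na Nb | (Ω₀ * ρ).trace = 0}) := by
  constructor
  · intro X hXne hXsep
    exact EW.dual_face (EW.traceB Na Nb) (witnessSet Na Nb) (sepSet Na Nb)
      (fun a ha b hb => EW.trace_nonneg ha hb) X hXne hXsep
  · intro Y hYne hYw
    exact EW.dual_face (EW.traceB Na Nb).flip (sepSet Na Nb) (witnessSet Na Nb)
      (fun a ha b hb => EW.trace_nonneg hb ha) Y hYne hYw
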